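/- Fix n ∈ ℕ and pairwise distinct points Ω₀♯, …, Ω_n♯ ∈ ℂ; set d♯ := min_{j≠k} |Ω_j♯ − Ω_k♯| > 0 and D := max_{j,k} |Ω_j♯ − Ω_k♯|. For each m ∈ {0,…,n} define the Lagrange polynomial G_m(ω) := ∏_{j∈{0,…,n}, j≠m} (ω − Ω_j♯)/(Ω_m♯ − Ω_j♯). Then: (i) there exists a constant C > 0, depending only on n and on the ratio D/d♯, such that for every δ ∈ (0, d♯/8] and every choice of points Ω₀, …, Ω_n ∈ ℂ with |Ω_j − Ω_j♯| ≤ δ for all j, and every m, one has |G_m(Ω_m) − 1| ≤ C·δ/d♯ and |G_m(Ω_j)| ≤ C·δ/d♯ for all j ≠ m; (ii) for all σ, η ∈ ℝ and all m, |G_m(σ + iη)| ≤ d♯^{−n}·(|σ| + |η| + max_j |Ω_j♯|)^n. -/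

import Mathlib

private lemma abs_prod_sub_one {ι : Type*} [DecidableEq ι] (s : Finset ι) (f : ι → ℂ) (t : ℝ)
    (ht : 0 ≤ t) (h : ∀ j ∈ s, norm (f j - 1) ≤ t) :
    norm ((∏ j ∈ s, f j) - 1) ≤ (1 + t) ^ s.card - 1 := by
  induction s using Finset.induction_on with
  | empty => simp
  | @insert a s ha ih =>
    have hmem : ∀ j ∈ s, norm (f j - 1) ≤ t := fun j hj => h j (Finset.mem_insert_of_mem hj)
    have ihs := ih hmem
    have hP : norm (∏ j ∈ s, f j) ≤ (1 + t) ^ s.card := by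
      calc norm (∏ j ∈ s, f j)
          ≤ norm ((∏ j ∈ s, f j) - 1) + norm (1 : ℂ) := by
            simpa using norm_add_le ((∏ j ∈ s, f j) - 1) 1
        _ ≤ ((1 + t) ^ s.card - 1) + 1 := by
            simp only [norm_one]
            linarith [ihs]
        _ = (1 + t) ^ s.card := by ring
    rw [Finset.prod_insert ha, Finset.card_insert_of_notMem ha]
    have key : norm (f a * (∏ j ∈ s, f j) - 1)
        = norm ((f a - 1) * (∏ j ∈ s, f j) + ((∏ j ∈ s, f j) - 1)) := by
      congr 1; ring
    rw [key]
    calc norm ((f a - 1) * (∏ j ∈ s, f j) + ((∏ j ∈ s, f j) - 1))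
        ≤ norm ((f a - 1) * (∏ j ∈ s, f j)) + norm ((∏ j ∈ s, f j) - 1) :=
          norm_add_le _ _
      _ = norm (f a - 1) * norm (∏ j ∈ s, f j) + norm ((∏ j ∈ s, f j) - 1) := by
          rw [norm_mul]
      _ ≤ t * (1 + t) ^ s.card + ((1 + t) ^ s.card - 1) := by
          gcongr
          exact h a (Finset.mem_insert_self a s)
      _ = (1 + t) ^ (s.card + 1) - 1 := by ring

private lemma one_add_pow_sub_one_le (n : ℕ) (t : ℝ) (ht : 0 ≤ t) (ht1 : t ≤ 1) :
    (1 + t) ^ n - 1 ≤ n * 2 ^ n * t := by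
  induction n with
  | zero => simp
  | succ k ih =>
    have h2 : (1 + t : ℝ) ≤ 2 := by linarith
    have hpos : (0:ℝ) ≤ (1 + t) ^ k := by positivity
    have h2k : (0:ℝ) < 2 ^ k := by positivity
    have : (1 + t) ^ (k + 1) - 1 = ((1 + t) ^ k - 1) * (1 + t) + t := by ring
    rw [this]
    have hmul : ((1 + t) ^ k - 1) * (1 + t) ≤ (k * 2 ^ k * t) * 2 := by
      have h1 : (0:ℝ) ≤ (1 + t) ^ k - 1 := by
        have := one_le_pow₀ (by linarith : (1:ℝ) ≤ 1 + t) (n := k)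
        linarith
      have := mul_le_mul ih h2 (by linarith) (by positivity : (0:ℝ) ≤ k * 2 ^ k * t)
      linarith
    have : (k : ℝ) * 2 ^ k * t * 2 + t ≤ (k + 1) * 2 ^ (k + 1) * t := by
      have hk : (0:ℝ) ≤ k := Nat.cast_nonneg k
      have h1le : (1:ℝ) ≤ 2 ^ (k+1) := one_le_pow₀ (by norm_num)
      have hp : (1:ℝ) ≤ 2 ^ k := one_le_pow₀ (by norm_num)
      have : (k : ℝ) * 2 ^ k * 2 + 1 ≤ ((k:ℝ) + 1) * 2 ^ (k + 1) := by
        rw [pow_succ]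
        nlinarith
      nlinarith
    push_cast
    linarith

theorem lagrange_pseudopole_interpolation (n : ℕ) :
    -- (i) robustness, with a constant depending only on n and the ratio D/d
    (∀ r : ℝ, 0 < r → ∃ C : ℝ, 0 < C ∧
      ∀ (Ωs : Fin (n + 1) → ℂ) (d D : ℝ), 0 < d →
        (∀ j k : Fin (n + 1), j ≠ k → d ≤ norm (Ωs j - Ωs k)) →
        (∀ j k : Fin (n + 1), norm (Ωs j - Ωs k) ≤ D) → D ≤ r * d →
        ∀ δ : ℝ, 0 < δ → δ ≤ d / 8 →
        ∀ Ω : Fin (n + 1) → ℂ, (∀ j, norm (Ω j - Ωs j) ≤ δ) →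
        ∀ m : Fin (n + 1),
          norm
              ((∏ j ∈ Finset.univ.erase m, (Ω m - Ωs j) / (Ωs m - Ωs j)) - 1)
            ≤ C * δ / d ∧
          ∀ j : Fin (n + 1), j ≠ m →
            norm
                (∏ k ∈ Finset.univ.erase m, (Ω j - Ωs k) / (Ωs m - Ωs k))
              ≤ C * δ / d) ∧
    -- (ii) growth bound on horizontal lines
    (∀ (Ωs : Fin (n + 1) → ℂ), Function.Injective Ωs →
      ∀ d : ℝ, 0 < d →
        (∀ j k : Fin (n + 1), j ≠ k → d ≤ norm (Ωs j - Ωs k)) →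
        ∀ σ η : ℝ, ∀ m : Fin (n + 1),
          norm
              (∏ j ∈ Finset.univ.erase m,
                (((σ : ℂ) + (η : ℂ) * Complex.I) - Ωs j) / (Ωs m - Ωs j))
            ≤ (1 / d) ^ n *
              (|σ| + |η| +
                Finset.univ.sup' Finset.univ_nonempty
                  (fun j => norm (Ωs j))) ^ n) := by
  have hcard : ∀ m : Fin (n + 1), (Finset.univ.erase m).card = n := by
    intro m
    rw [Finset.card_erase_of_mem (Finset.mem_univ m), Finset.card_univ, Fintype.card_fin]
    omega
  constructor
  · -- part (i)
    intro r hr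
    refine ⟨n * 2 ^ n + (r + 1) ^ n + 1, by positivity, ?_⟩
    intro Ωs d D hd hsep hdiam hDr δ hδ hδd Ω hΩ m
    have ht0 : 0 ≤ δ / d := le_of_lt (div_pos hδ hd)
    have ht1 : δ / d ≤ 1 := by
      rw [div_le_one hd]; linarith
    have hCmul : (n : ℝ) * 2 ^ n * (δ / d) ≤ (n * 2 ^ n + (r + 1) ^ n + 1) * δ / d := by
      rw [mul_div_assoc]
      have : (0:ℝ) ≤ (r + 1) ^ n + 1 := by positivity
      nlinarith [div_pos hδ hd]
    constructor
    · -- first bound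
      have hfac : ∀ j ∈ Finset.univ.erase m,
          norm ((Ω m - Ωs j) / (Ωs m - Ωs j) - 1) ≤ δ / d := by
        intro j hj
        have hjm : j ≠ m := (Finset.mem_erase.mp hj).1
        have hden : d ≤ norm (Ωs m - Ωs j) := hsep m j (fun h => hjm h.symm)
        have hne : (Ωs m - Ωs j) ≠ 0 := by
          intro h; rw [h] at hden; simp at hden; linarith
        have : (Ω m - Ωs j) / (Ωs m - Ωs j) - 1 = (Ω m - Ωs m) / (Ωs m - Ωs j) := by
          field_simp
          ring
        rw [this, norm_div]
        exact div_le_div₀ (le_of_lt hδ) (hΩ m) hd hden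
      calc norm ((∏ j ∈ Finset.univ.erase m, (Ω m - Ωs j) / (Ωs m - Ωs j)) - 1)
          ≤ (1 + δ / d) ^ (Finset.univ.erase m).card - 1 :=
            abs_prod_sub_one _ _ _ ht0 hfac
        _ = (1 + δ / d) ^ n - 1 := by rw [hcard m]
        _ ≤ n * 2 ^ n * (δ / d) := one_add_pow_sub_one_le n _ ht0 ht1
        _ ≤ (n * 2 ^ n + (r + 1) ^ n + 1) * δ / d := hCmul
    · -- second bound
      intro j hjm
      have hjmem : j ∈ Finset.univ.erase m := Finset.mem_erase.mpr ⟨hjm, Finset.mem_univ j⟩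
      rw [← Finset.mul_prod_erase _ _ hjmem, norm_mul]
      have hdenj : d ≤ norm (Ωs m - Ωs j) := hsep m j (fun h => hjm h.symm)
      have h1 : norm ((Ω j - Ωs j) / (Ωs m - Ωs j)) ≤ δ / d := by
        rw [norm_div]
        exact div_le_div₀ (le_of_lt hδ) (hΩ j) hd hdenj
      have h2 : norm (∏ k ∈ (Finset.univ.erase m).erase j,
          (Ω j - Ωs k) / (Ωs m - Ωs k)) ≤ (r + 1) ^ n := by
        have hle : ∀ k ∈ (Finset.univ.erase m).erase j,
            norm ((Ω j - Ωs k) / (Ωs m - Ωs k)) ≤ r + 1 := by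
          intro k hk
          have hkj : k ≠ j := (Finset.mem_erase.mp hk).1
          have hkm : k ≠ m := (Finset.mem_erase.mp (Finset.mem_erase.mp hk).2).1
          have hden : d ≤ norm (Ωs m - Ωs k) := hsep m k (fun h => hkm h.symm)
          have hnum : norm (Ω j - Ωs k) ≤ (r + 1) * d := by
            have : norm (Ω j - Ωs k)
                ≤ norm (Ω j - Ωs j) + norm (Ωs j - Ωs k) :=
              norm_sub_le_norm_sub_add_norm_sub _ _ _
            have hjk : norm (Ωs j - Ωs k) ≤ D := hdiam j k
            have : norm (Ω j - Ωs k) ≤ δ + r * d := by linarith [hΩ j]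
            linarith
          rw [norm_div]
          calc norm (Ω j - Ωs k) / norm (Ωs m - Ωs k)
              ≤ ((r + 1) * d) / d := div_le_div₀ (by positivity) hnum hd hden
            _ = r + 1 := by field_simp
        rw [norm_prod]
        calc ∏ k ∈ (Finset.univ.erase m).erase j,
              norm ((Ω j - Ωs k) / (Ωs m - Ωs k))
            ≤ ∏ _k ∈ (Finset.univ.erase m).erase j, (r + 1) := by
              exact Finset.prod_le_prod (fun k _ => norm_nonneg _) hle
          _ = (r + 1) ^ ((Finset.univ.erase m).erase j).card := Finset.prod_const _
          _ ≤ (r + 1) ^ n := by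
              apply pow_le_pow_right₀ (by linarith)
              calc ((Finset.univ.erase m).erase j).card
                  ≤ (Finset.univ.erase m).card := Finset.card_erase_le
                _ = n := hcard m
      calc norm ((Ω j - Ωs j) / (Ωs m - Ωs j)) *
            norm (∏ k ∈ (Finset.univ.erase m).erase j, (Ω j - Ωs k) / (Ωs m - Ωs k))
          ≤ (δ / d) * (r + 1) ^ n := by
            apply mul_le_mul h1 h2 (norm_nonneg _) ht0
        _ ≤ (n * 2 ^ n + (r + 1) ^ n + 1) * δ / d := by
            rw [mul_div_assoc]
            have h0 : (0:ℝ) ≤ δ / d := ht0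
            nlinarith [mul_nonneg h0 (by positivity : (0:ℝ) ≤ (n:ℝ) * 2 ^ n + 1)]
  · -- part (ii)
    intro Ωs _ d hd hsep σ η m
    set M : ℝ := |σ| + |η| + Finset.univ.sup' Finset.univ_nonempty (fun j => norm (Ωs j))
      with hM
    have hM0 : 0 ≤ M := by
      have : norm (Ωs m) ≤ Finset.univ.sup' Finset.univ_nonempty
          (fun j => norm (Ωs j)) :=
        Finset.le_sup' (fun j => norm (Ωs j)) (Finset.mem_univ m)
      have h0 := norm_nonneg (Ωs m)
      rw [hM]
      have := abs_nonneg σ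
      have := abs_nonneg η
      linarith
    have habs_z : norm ((σ : ℂ) + (η : ℂ) * Complex.I) ≤ |σ| + |η| := by
      calc norm ((σ : ℂ) + (η : ℂ) * Complex.I)
          ≤ norm (σ : ℂ) + norm ((η : ℂ) * Complex.I) :=
            norm_add_le _ _
        _ = |σ| + |η| := by simp
    rw [norm_prod]
    calc ∏ j ∈ Finset.univ.erase m,
          norm ((((σ : ℂ) + (η : ℂ) * Complex.I) - Ωs j) / (Ωs m - Ωs j))
        ≤ ∏ _j ∈ Finset.univ.erase m, (M / d) := by
          apply Finset.prod_le_prod (fun j _ => norm_nonneg _)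
          intro j hj
          have hjm : j ≠ m := (Finset.mem_erase.mp hj).1
          have hden : d ≤ norm (Ωs m - Ωs j) := hsep m j (fun h => hjm h.symm)
          have hnum : norm (((σ : ℂ) + (η : ℂ) * Complex.I) - Ωs j) ≤ M := by
            have h1 : norm (((σ : ℂ) + (η : ℂ) * Complex.I) - Ωs j)
                ≤ norm ((σ : ℂ) + (η : ℂ) * Complex.I) + norm (Ωs j) := by
              simpa [sub_eq_add_neg] using
                norm_add_le ((σ : ℂ) + (η : ℂ) * Complex.I) (-(Ωs j))
            have h2 : norm (Ωs j) ≤ Finset.univ.sup' Finset.univ_nonempty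
                (fun j => norm (Ωs j)) :=
              Finset.le_sup' (fun j => norm (Ωs j)) (Finset.mem_univ j)
            rw [hM]; linarith
          rw [norm_div]
          exact div_le_div₀ hM0 hnum hd hden
      _ = (M / d) ^ n := by rw [Finset.prod_const, hcard m]
      _ = (1 / d) ^ n * M ^ n := by rw [div_pow, div_pow, one_pow]; ring
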